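/- Let q be a prime power, let C be a linear code of length n over F_q, let g be a positive integer, let v ∈ F_q^n, let F be a field, and let y : F_q^{g+1} → F be a family with y_b ≠ 0 for all b ∈ F_q^{g+1}. Then 𝔍ac^{(g)}_{C,v}(y) = y_0^n · ∏_{ℓ ∈ F_q\{0}} (y_{(0,…,0,ℓ)} / y_0)^{wt_ℓ(v)} · Jac^{(g)}_{C,v}(X), where the variables X are given by: X_{(k),(ℓ)} := y_{L_{(k)}} / y_0 for k ∈ {1,…,g} and ℓ ∈ F_q\{0} (with L_{(k)} ∈ F_q^{g+1} the vector with ℓ in position k and 0 elsewhere), and X_{K,L} := ∏_{K' ⊆ K} y_{L_{K'}}^{(-1)^{|K| - |K'|}} for K ∈ ([g+1] choose p) with 2 ≤ p ≤ g+1 and L ∈ (F_q\{0})^p, the product over all subtuples K' of K including the empty tuple. -/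

import Mathlib

open scoped Classical

/-- The `g`-th homogeneous Jacobi polynomial `𝔍ac^{(g)}_{C,v}(y)`.  The sum ranges
over all `g`-tuples of (not necessarily distinct) codewords; for
`a : Fin (g+1) → R`, the exponent of `y a` is `n_a(u_1,…,u_g,v)`, the number of
coordinates `i` with `(u_1 i, …, u_g i, v i) = a`. -/
noncomputable def JacHom {R : Type*} [CommRing R] [Fintype R] {A : Type*} [CommRing A]
    {n g : ℕ} (C : Submodule R (Fin n → R)) (v : Fin n → R)
    (y : (Fin (g+1) → R) → A) : A :=
  ∑ u : Fin g → ↥C, ∏ a : Fin (g+1) → R,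
    y a ^ (Finset.univ.filter (fun i : Fin n =>
      (∀ j : Fin g, (u j : Fin n → R) i = a j.castSucc) ∧ v i = a (Fin.last g))).card

/-- The `g`-th inhomogeneous Jacobi polynomial `Jac^{(g)}_{C,v}(X)`.  A pair `(K,L)`
with `K ∈ ([g+1] choose p)`, `L ∈ (R \ {0})^p` is encoded as the nonzero vector
`b : Fin (g+1) → R` with support `K` and values `L`; the convention
`X_{(g+1),(j)} = 1` is realised by replacing `X b` by `1` whenever the support of
`b` is contained in `{g+1}` (the last index).  The exponent of `X b` is
`n_L(u_{K_1},…,u_{K_p})` with `u_{g+1} := v`. -/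
noncomputable def JacInhom {R : Type*} [CommRing R] [Fintype R] {A : Type*} [CommRing A]
    {n g : ℕ} (C : Submodule R (Fin n → R)) (v : Fin n → R)
    (X : (Fin (g+1) → R) → A) : A :=
  ∑ u : Fin g → ↥C, ∏ b ∈ Finset.univ.filter (fun b : Fin (g+1) → R => b ≠ 0),
    (if ∀ j : Fin g, b j.castSucc = 0 then 1 else X b) ^
      (Finset.univ.filter (fun i : Fin n =>
        (∀ j : Fin g, b j.castSucc ≠ 0 → (u j : Fin n → R) i = b j.castSucc) ∧
        (b (Fin.last g) ≠ 0 → v i = b (Fin.last g)))).card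

open Finset



section MyAux

variable {F : Type*} [Field F]

private lemma myZpowSum {x : F} (hx : x ≠ 0) {ι : Type*} (s : Finset ι) (f : ι → ℤ) :
    x ^ (∑ i ∈ s, f i) = ∏ i ∈ s, x ^ f i := by
  classical
  induction s using Finset.cons_induction with
  | empty => simp
  | cons a s ha ih => rw [sum_cons, prod_cons, zpow_add₀ hx, ih]

private lemma myPowersetSingleton {α : Type*} [DecidableEq α] (a : α) :
    ({a} : Finset α).powerset = {∅, {a}} := by
  ext t
  simp [Finset.subset_singleton_iff]

private lemma myMobiusInner {α : Type*} [DecidableEq α] (T S' : Finset α) (hS' : S' ⊆ T) :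
    ∑ S ∈ T.powerset.filter (fun S => S' ⊆ S), (-1 : ℤ) ^ (S.card - S'.card)
      = if S' = T then 1 else 0 := by
  have himg : T.powerset.filter (fun S => S' ⊆ S)
      = (T \ S').powerset.image (fun U => S' ∪ U) := by
    ext S
    simp only [mem_filter, mem_powerset, mem_image]
    constructor
    · rintro ⟨hST, hS'S⟩
      exact ⟨S \ S', sdiff_subset_sdiff hST le_rfl, Finset.union_sdiff_of_subset hS'S⟩
    · rintro ⟨U, hU, rfl⟩
      exact ⟨union_subset hS' (hU.trans sdiff_subset), subset_union_left⟩
  rw [himg, Finset.sum_image ?inj]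
  case inj =>
    intro U hU U' hU' h
    have d1 : Disjoint S' U := disjoint_of_subset_right (mem_powerset.1 hU) disjoint_sdiff
    have d2 : Disjoint S' U' := disjoint_of_subset_right (mem_powerset.1 hU') disjoint_sdiff
    have := congrArg (fun s => s \ S') h
    simpa [union_sdiff_cancel_left d1, union_sdiff_cancel_left d2] using this
  have hexp : ∀ U ∈ (T \ S').powerset,
      (-1 : ℤ) ^ ((S' ∪ U).card - S'.card) = (-1 : ℤ) ^ U.card := by
    intro U hU
    have d : Disjoint S' U := disjoint_of_subset_right (mem_powerset.1 hU) disjoint_sdiff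
    rw [card_union_of_disjoint d, Nat.add_sub_cancel_left]
  rw [Finset.sum_congr rfl hexp, Finset.sum_powerset_neg_one_pow_card]
  congr 1
  simp only [eq_iff_iff, sdiff_eq_empty_iff_subset]
  exact ⟨fun h => subset_antisymm hS' h, fun h => h ▸ le_rfl⟩

private lemma myMobiusProd {α : Type*} [DecidableEq α] (T : Finset α) (x : Finset α → F)
    (hx : ∀ S, S ⊆ T → x S ≠ 0) :
    ∏ S ∈ T.powerset, ∏ S' ∈ S.powerset, x S' ^ ((-1 : ℤ) ^ (S.card - S'.card)) = x T := by
  rw [Finset.prod_comm' (t' := T.powerset)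
      (s' := fun S' => T.powerset.filter (fun S => S' ⊆ S)) (fun S S' => by
        simp only [mem_powerset, mem_filter]
        exact ⟨fun ⟨h1, h2⟩ => ⟨⟨h1, h2⟩, h2.trans h1⟩, fun ⟨⟨h1, h2⟩, _⟩ => ⟨h1, h2⟩⟩)]
  have : ∀ S' ∈ T.powerset,
      (∏ S ∈ T.powerset.filter (fun S => S' ⊆ S), x S' ^ ((-1 : ℤ) ^ (S.card - S'.card)))
        = if S' = T then x S' else 1 := by
    intro S' hS'
    rw [← myZpowSum (hx S' (mem_powerset.1 hS')), myMobiusInner T S' (mem_powerset.1 hS')]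
    split <;> simp
  rw [Finset.prod_congr rfl this, Finset.prod_ite_eq' T.powerset T x,
    if_pos (mem_powerset_self T)]

end MyAux

private lemma myCoord {Fq : Type*} [Field Fq] [Fintype Fq] {F : Type*} [Field F]
    {g : ℕ}
    (y : (Fin (g+1) → Fq) → F) (hy : ∀ b, y b ≠ 0)
    (X : (Fin (g+1) → Fq) → F)
    (hX1 : ∀ (m : Fin g) (ℓ : Fq), ℓ ≠ 0 →
      X (fun i => if i = m.castSucc then ℓ else 0)
        = y (fun i => if i = m.castSucc then ℓ else 0) / y 0)
    (hX2 : ∀ b : Fin (g+1) → Fq,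
      2 ≤ (Finset.univ.filter (fun i => b i ≠ 0)).card →
      X b = ∏ K' ∈ (Finset.univ.filter (fun i => b i ≠ 0)).powerset,
        y (fun i => if i ∈ K' then b i else 0)
          ^ ((-1 : ℤ) ^ ((Finset.univ.filter (fun i => b i ≠ 0)).card - K'.card)))
    (a : Fin (g+1) → Fq) :
    y a = y 0 *
      (if a (Fin.last g) = 0 then 1
        else y (fun k => if k = Fin.last g then a (Fin.last g) else 0) / y 0) *
      ∏ b ∈ Finset.univ.filter (fun b : Fin (g+1) → Fq => b ≠ 0),
        (if (∀ k, b k ≠ 0 → a k = b k) then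
          (if ∀ j : Fin g, b j.castSucc = 0 then (1:F) else X b) else 1) := by
  set T : Finset (Fin (g+1)) := Finset.univ.filter (fun k => a k ≠ 0) with hT
  set res : Finset (Fin (g+1)) → (Fin (g+1) → Fq) :=
    fun S k => if k ∈ S then a k else 0 with hres
  have hmemT : ∀ {k}, k ∈ T → a k ≠ 0 := by
    intro k hk; simpa [hT] using hk
  have hres0 : res ∅ = 0 := by funext k; simp [hres]
  have hresT : res T = a := by
    funext k
    by_cases h : a k = 0 <;> simp [hres, hT, h]
  have hsupp : ∀ S, S ⊆ T → Finset.univ.filter (fun k => res S k ≠ 0) = S := by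
    intro S hS
    ext k
    simp only [mem_filter, mem_univ, true_and, hres]
    constructor
    · intro h; by_contra hk; simp [hk] at h
    · intro hk
      simp [hk, hmemT (hS hk)]
  have hresres : ∀ S K', K' ⊆ S →
      (fun i => if i ∈ K' then res S i else 0) = res K' := by
    intro S K' hK'
    funext i
    by_cases h : i ∈ K'
    · simp [hres, h, hK' h]
    · simp [hres, h]
  set G : Finset (Fin (g+1)) → F :=
    fun S => ∏ S' ∈ S.powerset, y (res S') ^ ((-1 : ℤ) ^ (S.card - S'.card)) with hG
  have hGempty : G ∅ = y 0 := by
    simp [hG, hres0]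
  have hGsingle : ∀ c : Fin (g+1), G {c} = y (res {c}) / y 0 := by
    intro c
    have hps : ({c} : Finset (Fin (g+1))).powerset = {∅, {c}} := by
      ext t; simp [Finset.subset_singleton_iff]
    rw [hG]
    simp only [hps]
    rw [Finset.prod_insert (fun h => (Finset.singleton_ne_empty c) ((mem_singleton.1 h).symm)),
      Finset.prod_singleton]
    simp [hres0, div_eq_mul_inv, mul_comm]
  -- step 1: the product over b equals a product over nonempty subsets of T
  have hprodb :
      (∏ b ∈ Finset.univ.filter (fun b : Fin (g+1) → Fq => b ≠ 0),
        (if (∀ k, b k ≠ 0 → a k = b k) then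
          (if ∀ j : Fin g, b j.castSucc = 0 then (1:F) else X b) else 1))
      = ∏ S ∈ T.powerset.erase ∅,
          (if ∀ j : Fin g, res S j.castSucc = 0 then (1:F) else X (res S)) := by
    rw [← Finset.prod_filter, Finset.filter_filter]
    have hset : Finset.univ.filter
          (fun b : Fin (g+1) → Fq => b ≠ 0 ∧ ∀ k, b k ≠ 0 → a k = b k)
        = (T.powerset.erase ∅).image res := by
      ext b
      simp only [mem_filter, mem_univ, true_and, mem_image, mem_erase, mem_powerset]
      constructor
      · rintro ⟨hb0, hmatch⟩
        refine ⟨Finset.univ.filter (fun k => b k ≠ 0), ⟨?_, ?_⟩, ?_⟩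
        · obtain ⟨k, hk⟩ := Function.ne_iff.1 hb0
          have hk' : b k ≠ 0 := by simpa using hk
          exact Finset.ne_empty_of_mem (mem_filter.2 ⟨mem_univ k, hk'⟩)
        · intro k hk
          simp only [mem_filter, mem_univ, true_and] at hk
          simp only [hT, mem_filter, mem_univ, true_and]
          rw [hmatch k hk]; exact hk
        · funext k
          by_cases hk : b k = 0 <;> simp [hres, hk]
          exact hmatch k hk
      · rintro ⟨S, ⟨hSne, hST⟩, rfl⟩
        obtain ⟨k, hk⟩ := Finset.nonempty_iff_ne_empty.2 hSne
        constructor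
        · intro h
          have h0 : res S k = 0 := congrFun h k
          simp [hres, hk, hmemT (hST hk)] at h0
        · intro k' hk'
          by_cases h : k' ∈ S
          · simp [hres, h]
          · simp [hres, h] at hk'
    rw [hset, Finset.prod_image ?inj]
    case inj =>
      intro S hS S' hS' h
      simp only [mem_coe, mem_erase, mem_powerset] at hS hS'
      rw [← hsupp S hS.2, ← hsupp S' hS'.2, h]
  -- step 2: each factor is `if S = {last} then 1 else G S`
  have hfactor : ∀ S ∈ T.powerset.erase ∅,
      (if ∀ j : Fin g, res S j.castSucc = 0 then (1:F) else X (res S))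
        = if S = {Fin.last g} then 1 else G S := by
    intro S hS
    simp only [mem_erase, mem_powerset] at hS
    obtain ⟨hSne, hST⟩ := hS
    have hScond : (∀ j : Fin g, res S j.castSucc = 0) ↔ S = {Fin.last g} := by
      constructor
      · intro h
        apply Finset.eq_singleton_iff_nonempty_unique_mem.2
        refine ⟨Finset.nonempty_iff_ne_empty.2 hSne, ?_⟩
        intro k hk
        by_contra hkl
        obtain ⟨j, hj⟩ := Fin.exists_castSucc_eq.2 hkl
        have := h j
        rw [hj] at this
        simp [hres, hk, hmemT (hST hk)] at this
      · rintro rfl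
        intro j
        have hjn : j.castSucc ∉ ({Fin.last g} : Finset _) := by
          simp [(Fin.castSucc_lt_last j).ne]
        simp [hres, hjn]
    by_cases hlast : S = {Fin.last g}
    · rw [if_pos (hScond.2 hlast), if_pos hlast]
    · rw [if_neg (fun h => hlast (hScond.1 h)), if_neg hlast]
      rcases Nat.lt_or_ge S.card 2 with hcard | hcard
      · -- card = 1
        have hcard1 : S.card = 1 := by
          have := Finset.card_pos.2 (Finset.nonempty_iff_ne_empty.2 hSne)
          omega
        obtain ⟨c, rfl⟩ := Finset.card_eq_one.1 hcard1
        have hcl : c ≠ Fin.last g := fun h => hlast (by rw [h])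
        obtain ⟨m, hm⟩ := Fin.exists_castSucc_eq.2 hcl
        have hresc : res {c} = fun k => if k = m.castSucc then a c else 0 := by
          funext k
          rw [hm]
          by_cases h : k = c <;> simp [hres, h]
        have hac : a c ≠ 0 := hmemT (hST (mem_singleton_self c))
        rw [hresc, hX1 m (a c) hac, hGsingle c, hresc]
      · -- card ≥ 2
        have h2 := hX2 (res S) (by rwa [hsupp S hST])
        rw [hsupp S hST] at h2
        rw [h2, hG]
        refine Finset.prod_congr rfl fun K' hK' => ?_
        rw [hresres S K' (mem_powerset.1 hK')]
  rw [hprodb, Finset.prod_congr rfl hfactor]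
  -- step 3: assemble with the Möbius inversion
  have hmob : ∏ S ∈ T.powerset, G S = y a := by
    rw [hG, ← hresT]
    exact myMobiusProd T (fun S => y (res S)) (fun S _ => hy _)
  by_cases hal : a (Fin.last g) = 0
  · have hln : ({Fin.last g} : Finset (Fin (g+1))) ∉ T.powerset.erase ∅ := by
      simp only [mem_erase, mem_powerset, Finset.singleton_subset_iff, not_and]
      intro _ h
      exact hmemT h hal
    have : ∀ S ∈ T.powerset.erase ∅, (if S = {Fin.last g} then (1:F) else G S) = G S := by
      intro S hS
      rw [if_neg (fun h => hln (by rwa [h] at hS))]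
    rw [Finset.prod_congr rfl this, if_pos hal, mul_one, ← hGempty,
      Finset.mul_prod_erase T.powerset G (Finset.empty_mem_powerset T), hmob]
  · have hlT : Fin.last g ∈ T := by simp [hT, hal]
    have hlmem : ({Fin.last g} : Finset (Fin (g+1))) ∈ T.powerset.erase ∅ :=
      mem_erase.2 ⟨(Finset.singleton_ne_empty _), mem_powerset.2 (by simpa using hlT)⟩
    have hresl : res {Fin.last g} = fun k => if k = Fin.last g then a (Fin.last g) else 0 := by
      funext k
      by_cases h : k = Fin.last g <;> simp [hres, h]
    rw [if_neg hal, ← hresl, ← hGsingle (Fin.last g)]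
    rw [← Finset.mul_prod_erase _ _ hlmem, if_pos rfl, one_mul]
    have : ∀ S ∈ (T.powerset.erase ∅).erase {Fin.last g},
        (if S = {Fin.last g} then (1:F) else G S) = G S := by
      intro S hS
      rw [if_neg (mem_erase.1 hS).1]
    rw [Finset.prod_congr rfl this, mul_assoc,
      Finset.mul_prod_erase _ G hlmem, ← hGempty,
      Finset.mul_prod_erase T.powerset G (Finset.empty_mem_powerset T), hmob]
private lemma myPowCardFilter {M : Type*} [CommMonoid M] {ι : Type*} (s : Finset ι)
    (p : ι → Prop) [DecidablePred p] (x : M) :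
    x ^ (s.filter p).card = ∏ i ∈ s, if p i then x else 1 := by
  rw [Finset.prod_ite, Finset.prod_const, Finset.prod_const_one, mul_one]


/-- **Theorem (HomoInhomo)**, over a finite field `F_q` (an arbitrary finite field,
since `q` ranges over all prime powers).  The homogeneous Jacobi polynomial is
obtained from the inhomogeneous one by the substitution
`X_{(k),(ℓ)} := y_{L_{(k)}} / y_0` (for `k ∈ [g]`, `ℓ ≠ 0`, where `L_{(k)}` has `ℓ`
in position `k` and `0` elsewhere) and
`X_{K,L} := ∏_{K' ⊆ K} y_{L_{K'}}^{(-1)^{|K|-|K'|}}` for `|K| ≥ 2`, up to the factor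
`y_0^n ∏_{ℓ ≠ 0} (y_{(0,…,0,ℓ)}/y_0)^{wt_ℓ(v)}`. -/
theorem homogeneous_eq_inhomogeneous_Fq
    {Fq : Type*} [Field Fq] [Fintype Fq]
    {F : Type*} [Field F]
    {n g : ℕ} (hg : 0 < g)
    (C : Submodule Fq (Fin n → Fq)) (v : Fin n → Fq)
    (y : (Fin (g+1) → Fq) → F) (hy : ∀ b, y b ≠ 0)
    (X : (Fin (g+1) → Fq) → F)
    (hX1 : ∀ (m : Fin g) (ℓ : Fq), ℓ ≠ 0 →
      X (fun i => if i = m.castSucc then ℓ else 0)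
        = y (fun i => if i = m.castSucc then ℓ else 0) / y 0)
    (hX2 : ∀ b : Fin (g+1) → Fq,
      2 ≤ (Finset.univ.filter (fun i => b i ≠ 0)).card →
      X b = ∏ K' ∈ (Finset.univ.filter (fun i => b i ≠ 0)).powerset,
        y (fun i => if i ∈ K' then b i else 0)
          ^ ((-1 : ℤ) ^ ((Finset.univ.filter (fun i => b i ≠ 0)).card - K'.card))) :
    JacHom C v y
      = y 0 ^ n *
        (∏ ℓ ∈ Finset.univ.filter (fun ℓ : Fq => ℓ ≠ 0),
          (y (fun i => if i = Fin.last g then ℓ else 0) / y 0)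
            ^ (Finset.univ.filter (fun i : Fin n => v i = ℓ)).card) *
        JacInhom C v X := by
  unfold JacHom JacInhom
  rw [Finset.mul_sum]
  refine Finset.sum_congr rfl fun u _ => ?_
  set w : Fin n → (Fin (g+1) → Fq) :=
    fun i => Fin.snoc (fun j => (u j : Fin n → Fq) i) (v i) with hw
  set vf : Fq → F :=
    fun ℓ => if ℓ = 0 then 1 else y (fun k => if k = Fin.last g then ℓ else 0) / y 0 with hvf
  -- LHS
  have hfil1 : ∀ a : Fin (g+1) → Fq,
      Finset.univ.filter (fun i : Fin n =>
        (∀ j : Fin g, (u j : Fin n → Fq) i = a j.castSucc) ∧ v i = a (Fin.last g))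
      = Finset.univ.filter (fun i : Fin n => w i = a) := by
    intro a
    refine Finset.filter_congr fun i _ => ?_
    constructor
    · rintro ⟨h1, h2⟩
      funext k
      induction k using Fin.lastCases with
      | last => rw [hw]; simpa [Fin.snoc_last] using h2
      | cast j => rw [hw]; simpa [Fin.snoc_castSucc] using h1 j
    · intro h
      rw [← h]
      exact ⟨fun j => by simp [hw, Fin.snoc_castSucc], by simp [hw, Fin.snoc_last]⟩
  have hL : (∏ a : Fin (g+1) → Fq, y a ^ (Finset.univ.filter (fun i : Fin n =>
        (∀ j : Fin g, (u j : Fin n → Fq) i = a j.castSucc) ∧ v i = a (Fin.last g))).card)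
      = ∏ i : Fin n, y (w i) := by
    simp_rw [hfil1]
    rw [← Finset.prod_fiberwise' Finset.univ w y]
    exact Finset.prod_congr rfl fun a _ => (Finset.prod_const _).symm
  -- v-factor
  have hV : (∏ ℓ ∈ Finset.univ.filter (fun ℓ : Fq => ℓ ≠ 0),
        (y (fun i => if i = Fin.last g then ℓ else 0) / y 0)
          ^ (Finset.univ.filter (fun i : Fin n => v i = ℓ)).card)
      = ∏ i : Fin n, vf (v i) := by
    have h1 : ∀ ℓ ∈ Finset.univ.filter (fun ℓ : Fq => ℓ ≠ 0),
        (y (fun i => if i = Fin.last g then ℓ else 0) / y 0)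
          ^ (Finset.univ.filter (fun i : Fin n => v i = ℓ)).card
        = vf ℓ ^ (Finset.univ.filter (fun i : Fin n => v i = ℓ)).card := by
      intro ℓ hℓ
      simp only [Finset.mem_filter] at hℓ
      simp only [hvf]
      rw [if_neg hℓ.2]
    rw [Finset.prod_congr rfl h1]
    have h2 : (∏ ℓ ∈ Finset.univ.filter (fun ℓ : Fq => ℓ ≠ 0),
          vf ℓ ^ (Finset.univ.filter (fun i : Fin n => v i = ℓ)).card)
        = ∏ ℓ : Fq, vf ℓ ^ (Finset.univ.filter (fun i : Fin n => v i = ℓ)).card := by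
      refine Finset.prod_subset (Finset.filter_subset _ _) fun ℓ _ hℓ => ?_
      simp only [Finset.mem_filter, Finset.mem_univ, true_and, not_not] at hℓ
      simp only [hvf]
      simp [hℓ]
    rw [h2, ← Finset.prod_fiberwise' Finset.univ v vf]
    exact Finset.prod_congr rfl fun ℓ _ => (Finset.prod_const _).symm
  -- inhomogeneous product
  have hfil2 : ∀ b : Fin (g+1) → Fq,
      Finset.univ.filter (fun i : Fin n =>
        (∀ j : Fin g, b j.castSucc ≠ 0 → (u j : Fin n → Fq) i = b j.castSucc) ∧
        (b (Fin.last g) ≠ 0 → v i = b (Fin.last g)))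
      = Finset.univ.filter (fun i : Fin n => ∀ k, b k ≠ 0 → w i k = b k) := by
    intro b
    refine Finset.filter_congr fun i _ => ?_
    constructor
    · rintro ⟨h1, h2⟩ k hk
      induction k using Fin.lastCases with
      | last => rw [hw]; simpa [Fin.snoc_last] using h2 hk
      | cast j => rw [hw]; simpa [Fin.snoc_castSucc] using h1 j hk
    · intro h
      refine ⟨fun j hj => ?_, fun hl => ?_⟩
      · have := h j.castSucc hj
        rw [hw] at this
        simpa [Fin.snoc_castSucc] using this
      · have := h (Fin.last g) hl
        rw [hw] at this
        simpa [Fin.snoc_last] using this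
  have hP : (∏ b ∈ Finset.univ.filter (fun b : Fin (g+1) → Fq => b ≠ 0),
        (if ∀ j : Fin g, b j.castSucc = 0 then (1:F) else X b) ^
          (Finset.univ.filter (fun i : Fin n =>
            (∀ j : Fin g, b j.castSucc ≠ 0 → (u j : Fin n → Fq) i = b j.castSucc) ∧
            (b (Fin.last g) ≠ 0 → v i = b (Fin.last g)))).card)
      = ∏ i : Fin n, ∏ b ∈ Finset.univ.filter (fun b : Fin (g+1) → Fq => b ≠ 0),
          (if (∀ k, b k ≠ 0 → w i k = b k) then
            (if ∀ j : Fin g, b j.castSucc = 0 then (1:F) else X b) else 1) := by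
    rw [Finset.prod_comm]
    refine Finset.prod_congr rfl fun b _ => ?_
    rw [hfil2 b, myPowCardFilter]
  rw [hL, hV, hP]
  have hyn : y 0 ^ n = ∏ _i : Fin n, y 0 := by
    rw [Finset.prod_const, Finset.card_univ, Fintype.card_fin]
  rw [hyn, ← Finset.prod_mul_distrib, ← Finset.prod_mul_distrib]
  refine Finset.prod_congr rfl fun i _ => ?_
  have := myCoord y hy X hX1 hX2 (w i)
  rw [this]
  congr 2
  rw [hvf, hw]
  simp [Fin.snoc_last]
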